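/- Let r : ℝ → ℝ be a positive, twice continuously differentiable function on an open interval I satisfying r(φ)² + 2·r'(φ)² − r''(φ)·r(φ) = 0 for all φ ∈ I. Then there exist constants A > 0 and B ∈ ℝ such that r(φ) = A / cos(φ − B) for all φ ∈ I (in particular cos(φ − B) > 0 on I). -/

import Mathlib

open Real

theorem flat_ode_characterization (a b : ℝ) (r : ℝ → ℝ)
    (hr : ContDiffOn ℝ 2 r (Set.Ioo a b))
    (hpos : ∀ φ ∈ Set.Ioo a b, 0 < r φ)
    (hode : ∀ φ ∈ Set.Ioo a b,
      r φ ^ 2 + 2 * (deriv r φ) ^ 2 - deriv (deriv r) φ * r φ = 0) :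
    ∃ A B : ℝ, 0 < A ∧ ∀ φ ∈ Set.Ioo a b,
      0 < Real.cos (φ - B) ∧ r φ = A / Real.cos (φ - B) := by
  set s := Set.Ioo a b with hs_def
  have hsopen : IsOpen s := isOpen_Ioo
  rcases s.eq_empty_or_nonempty with hemp | ⟨φ₀, hφ₀⟩
  · exact ⟨1, 0, one_pos, fun φ hφ => by rw [hemp] at hφ; exact absurd hφ (Set.notMem_empty φ)⟩
  -- differentiability facts
  have hd1 : ∀ x ∈ s, HasDerivAt r (deriv r x) x := by
    intro x hx
    exact ((hr.differentiableOn (by norm_num)).differentiableAt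
      (hsopen.mem_nhds hx)).hasDerivAt
  have hr' : ContDiffOn ℝ 1 (deriv r) s := by
    have := hr.deriv_of_isOpen hsopen (m := 1) le_rfl
    exact this
  have hd2 : ∀ x ∈ s, HasDerivAt (deriv r) (deriv (deriv r) x) x := by
    intro x hx
    exact ((hr'.differentiableOn one_ne_zero).differentiableAt (hsopen.mem_nhds hx)).hasDerivAt
  -- the constant functions
  set F : ℝ → ℝ := fun φ => (r φ)⁻¹ * Real.cos φ + deriv r φ / r φ ^ 2 * Real.sin φ with hF
  set G : ℝ → ℝ := fun φ => (r φ)⁻¹ * Real.sin φ - deriv r φ / r φ ^ 2 * Real.cos φ with hG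
  have hFd : ∀ x ∈ s, HasDerivAt F 0 x := by
    intro x hx
    have hrne : r x ≠ 0 := (hpos x hx).ne'
    have h2ne : r x ^ 2 ≠ 0 := pow_ne_zero 2 hrne
    have h1 := ((hd1 x hx).inv hrne).mul (Real.hasDerivAt_cos x)
    have h2 := (((hd2 x hx).div ((hd1 x hx).pow 2) h2ne)).mul (Real.hasDerivAt_sin x)
    have := h1.add h2
    convert this using 1
    · rfl
    · rfl
    · rfl
    have hode' := hode x hx
    simp only [Pi.pow_apply, Pi.inv_apply, Pi.div_apply]
    field_simp
    first
    | linear_combination (Real.sin x * r x) * hode'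
    | linear_combination (Real.sin x * r x ^ 6) * hode'
  have hGd : ∀ x ∈ s, HasDerivAt G 0 x := by
    intro x hx
    have hrne : r x ≠ 0 := (hpos x hx).ne'
    have h2ne : r x ^ 2 ≠ 0 := pow_ne_zero 2 hrne
    have h1 := ((hd1 x hx).inv hrne).mul (Real.hasDerivAt_sin x)
    have h2 := (((hd2 x hx).div ((hd1 x hx).pow 2) h2ne)).mul (Real.hasDerivAt_cos x)
    have := h1.sub h2
    convert this using 1
    · rfl
    · rfl
    · rfl
    have hode' := hode x hx
    simp only [Pi.pow_apply, Pi.inv_apply, Pi.div_apply]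
    field_simp
    first
    | linear_combination (-Real.cos x * r x) * hode'
    | linear_combination (-Real.cos x * r x ^ 6) * hode'
  have hconv : Convex ℝ s := convex_Ioo a b
  have hud : UniqueDiffOn ℝ s := hsopen.uniqueDiffOn
  have hconstF : ∀ x ∈ s, F x = F φ₀ := by
    intro x hx
    refine hconv.is_const_of_fderivWithin_eq_zero
      (fun y hy => ((hFd y hy).differentiableAt.differentiableWithinAt)) ?_ hx hφ₀
    intro y hy
    have := ((hFd y hy).hasFDerivAt.hasFDerivWithinAt).fderivWithin (hud y hy)
    rw [this]
    ext; simp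
  have hconstG : ∀ x ∈ s, G x = G φ₀ := by
    intro x hx
    refine hconv.is_const_of_fderivWithin_eq_zero
      (fun y hy => ((hGd y hy).differentiableAt.differentiableWithinAt)) ?_ hx hφ₀
    intro y hy
    have := ((hGd y hy).hasFDerivAt.hasFDerivWithinAt).fderivWithin (hud y hy)
    rw [this]
    ext; simp
  set C := F φ₀ with hC
  set D := G φ₀ with hD
  -- u = 1/r satisfies u φ = C cos φ + D sin φ
  have hu : ∀ x ∈ s, (r x)⁻¹ = C * Real.cos x + D * Real.sin x := by
    intro x hx
    have h1 := hconstF x hx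
    have h2 := hconstG x hx
    have hsc := Real.sin_sq_add_cos_sq x
    simp only [hF, hG] at h1 h2
    linear_combination Real.cos x * h1 + Real.sin x * h2 - (r x)⁻¹ * hsc
  -- polar representation of (C, D)
  have hCD : C ^ 2 + D ^ 2 > 0 := by
    have h0 := hu φ₀ hφ₀
    have hrpos := hpos φ₀ hφ₀
    by_contra h
    push_neg at h
    have hC2 : C ^ 2 = 0 := le_antisymm (by nlinarith [sq_nonneg D]) (sq_nonneg C)
    have hD2 : D ^ 2 = 0 := le_antisymm (by nlinarith [sq_nonneg C]) (sq_nonneg D)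
    have hC0 : C = 0 := by
      have := pow_eq_zero_iff (n := 2) (by norm_num) |>.mp hC2
      exact this
    have hD0 : D = 0 := by
      have := pow_eq_zero_iff (n := 2) (by norm_num) |>.mp hD2
      exact this
    rw [hC0, hD0] at h0
    simp at h0
    exact absurd h0 hrpos.ne'
  set z : ℂ := ⟨C, D⟩ with hz
  have hzne : z ≠ 0 := by
    intro h
    rw [Complex.ext_iff] at h
    simp [hz] at h
    nlinarith [hCD, h.1, h.2]
  set R := ‖z‖ with hR
  have hRpos : 0 < R := norm_pos_iff.mpr hzne
  set B := Complex.arg z with hB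
  have hcosB : Real.cos B = C / R := by
    rw [hB, Complex.cos_arg hzne]
  have hsinB : Real.sin B = D / R := by
    rw [hB, Complex.sin_arg]
  refine ⟨R⁻¹, B, inv_pos.mpr hRpos, fun φ hφ => ?_⟩
  have hcos : Real.cos (φ - B) = (r φ)⁻¹ / R := by
    rw [Real.cos_sub, hcosB, hsinB, hu φ hφ]
    field_simp
  have hrpos := hpos φ hφ
  have hcpos : 0 < Real.cos (φ - B) := by
    rw [hcos]; positivity
  refine ⟨hcpos, ?_⟩
  rw [hcos]
  field_simp
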